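/- Let V be a countably infinite set and let H be a 3-uniform hypergraph on V (a collection of 3-element subsets of V) with the extension property: for every finite S ⊆ V and every set P of 2-element subsets of S there exists x ∈ V \ S such that for all distinct a, b ∈ S, the set {x,a,b} belongs to H iff {a,b} ∈ P. (Such a hypergraph is the universal homogeneous 3-uniform hypergraph.) Then its distinguishing number is 2: there exists a coloring c : V → Bool such that the only automorphism g of H with c ∘ g = c is the identity, while H does have a nontrivial automorphism. -/

import Mathlib

namespace UnivHyp

set_option linter.unusedSectionVars false
set_option maxHeartbeats 1000000

variable {V : Type*} [DecidableEq V]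

lemma pair_eq_cases {a b c d : V} (h : ({a, b} : Finset V) = {c, d}) :
    (a = c ∧ (b = d ∨ b = c)) ∨ (a = d ∧ (b = c ∨ b = d)) := by
  have ha : a ∈ ({c, d} : Finset V) := by rw [← h]; simp
  have hb : b ∈ ({c, d} : Finset V) := by rw [← h]; simp
  simp only [Finset.mem_insert, Finset.mem_singleton] at ha hb
  tauto

lemma triple_rot (a b c : V) : ({a, b, c} : Finset V) = {c, a, b} := by
  ext x; simp; tauto

lemma triple_swap (a b c : V) : ({a, b, c} : Finset V) = {a, c, b} := by
  ext x; simp; tauto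

noncomputable def approx {α : Type*} [Nonempty α] (step : ℕ → (ℕ → α) → α) : ℕ → ℕ → α
  | 0 => fun _ => Classical.arbitrary α
  | (n+1) => fun m => if m = n then step n (approx step n) else approx step n m

noncomputable def build {α : Type*} [Nonempty α] (step : ℕ → (ℕ → α) → α) (n : ℕ) : α :=
  step n (approx step n)

lemma approx_eq_build {α : Type*} [Nonempty α] (step : ℕ → (ℕ → α) → α) :
    ∀ n m, m < n → approx step n m = build step m := by
  intro n
  induction n with
  | zero => intro m hm; omega
  | succ n ih =>
    intro m hm
    by_cases h : m = n
    · subst h; simp [approx, build]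
    · have : m < n := by omega
      simp [approx, h, ih m this]

section Hyp
variable [Countable V] [Infinite V]
variable (H : Set (Finset V))
variable (h3 : ∀ e ∈ H, e.card = 3)
variable (hext : ∀ S : Finset V, ∀ P : Set (Finset V), (∀ p ∈ P, p ⊆ S ∧ p.card = 2) →
      ∃ x, x ∉ S ∧ ∀ a ∈ S, ∀ b ∈ S, a ≠ b →
        (({x, a, b} : Finset V) ∈ H ↔ ({a, b} : Finset V) ∈ P))

noncomputable def choosePt (S : Finset V) (P : Set (Finset V)) : V :=
  open Classical in
  if h : (∀ p ∈ P, p ⊆ S ∧ p.card = 2) then (hext S P h).choose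
  else Classical.arbitrary V

lemma choosePt_spec {S : Finset V} {P : Set (Finset V)}
    (h : ∀ p ∈ P, p ⊆ S ∧ p.card = 2) :
    choosePt H hext S P ∉ S ∧ ∀ a ∈ S, ∀ b ∈ S, a ≠ b →
      (({choosePt H hext S P, a, b} : Finset V) ∈ H ↔ ({a, b} : Finset V) ∈ P) := by
  rw [choosePt, dif_pos h]
  exact (hext S P h).choose_spec

variable (eV : ℕ ≃ V)

/-- The vertex set over which the n-th black vertex is chosen. -/
def S1 (f : ℕ → V) (n : ℕ) : Finset V :=
  ((Finset.range n).image f) ∪ ((Finset.range (n+1)).image eV)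

/-- The prescribed pairs for the n-th black vertex. -/
def P1 (f : ℕ → V) (n : ℕ) : Set (Finset V) :=
  {p | (2 ≤ n ∧ f 0 ≠ f (n-1) ∧ p = {f 0, f (n-1)}) ∨
       (1 ≤ n ∧ eV n ∉ (Finset.range n).image f ∧ p = {f 0, eV n})}

lemma mem_S1_left {f : ℕ → V} {n i : ℕ} (h : i < n) : f i ∈ S1 eV f n := by
  simp only [S1, Finset.mem_union, Finset.mem_image, Finset.mem_range]
  exact Or.inl ⟨i, h, rfl⟩

lemma mem_S1_right {f : ℕ → V} {n k : ℕ} (h : k ≤ n) : eV k ∈ S1 eV f n := by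
  simp only [S1, Finset.mem_union, Finset.mem_image, Finset.mem_range]
  exact Or.inr ⟨k, by omega, rfl⟩

lemma P1_good (f : ℕ → V) (n : ℕ) : ∀ p ∈ P1 eV f n, p ⊆ S1 eV f n ∧ p.card = 2 := by
  rintro p (⟨hn, hne, rfl⟩ | ⟨hn, hnot, rfl⟩)
  · refine ⟨?_, Finset.card_pair hne⟩
    intro x hx
    simp only [Finset.mem_insert, Finset.mem_singleton] at hx
    rcases hx with rfl | rfl
    · exact mem_S1_left eV (by omega)
    · exact mem_S1_left eV (by omega)
  · have hne : f 0 ≠ eV n := by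
      intro h
      exact hnot (by rw [← h]; exact Finset.mem_image.2 ⟨0, by simp; omega, rfl⟩)
    refine ⟨?_, Finset.card_pair hne⟩
    intro x hx
    simp only [Finset.mem_insert, Finset.mem_singleton] at hx
    rcases hx with rfl | rfl
    · exact mem_S1_left eV (by omega)
    · exact mem_S1_right eV le_rfl

lemma S1_congr {f g : ℕ → V} {n : ℕ} (h : ∀ m < n, f m = g m) : S1 eV f n = S1 eV g n := by
  unfold S1
  congr 1
  exact Finset.image_congr (fun x hx => h x (by simpa using hx))

lemma P1_congr {f g : ℕ → V} {n : ℕ} (h : ∀ m < n, f m = g m) : P1 eV f n = P1 eV g n := by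
  have himg : (Finset.range n).image f = (Finset.range n).image g :=
    Finset.image_congr (fun x hx => h x (by simpa using hx))
  rcases Nat.eq_zero_or_pos n with rfl | hn
  · ext p; simp [P1]
  · have h0 : f 0 = g 0 := h 0 hn
    have h1 : f (n-1) = g (n-1) := h (n-1) (by omega)
    ext p
    simp only [P1, Set.mem_setOf_eq, h0, h1, himg]

noncomputable def step1 (n : ℕ) (f : ℕ → V) : V := choosePt H hext (S1 eV f n) (P1 eV f n)

noncomputable def bseq : ℕ → V := build (step1 H hext eV)

lemma bseq_eq (n : ℕ) :
    bseq H hext eV n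
      = choosePt H hext (S1 eV (bseq H hext eV) n) (P1 eV (bseq H hext eV) n) := by
  have hagree : ∀ m < n, approx (step1 H hext eV) n m = bseq H hext eV m :=
    approx_eq_build _ n
  show step1 H hext eV n (approx (step1 H hext eV) n) = _
  have hrfl : step1 H hext eV n (approx (step1 H hext eV) n)
      = choosePt H hext (S1 eV (approx (step1 H hext eV) n) n)
          (P1 eV (approx (step1 H hext eV) n) n) := rfl
  rw [hrfl, S1_congr eV (fun m hm => hagree m hm), P1_congr eV (fun m hm => hagree m hm)]

lemma bseq_spec (n : ℕ) :
    bseq H hext eV n ∉ S1 eV (bseq H hext eV) n ∧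
    ∀ a ∈ S1 eV (bseq H hext eV) n, ∀ c ∈ S1 eV (bseq H hext eV) n, a ≠ c →
      (({bseq H hext eV n, a, c} : Finset V) ∈ H ↔
        ({a, c} : Finset V) ∈ P1 eV (bseq H hext eV) n) := by
  have h := choosePt_spec H hext (P1_good eV (bseq H hext eV) n)
  rw [← bseq_eq] at h
  exact h

lemma bseq_inj : Function.Injective (bseq H hext eV) := by
  have key : ∀ m n : ℕ, m < n → bseq H hext eV m ≠ bseq H hext eV n := by
    intro m n hmn heq
    exact (bseq_spec H hext eV n).1 (heq ▸ mem_S1_left eV hmn)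
  intro m n h
  rcases lt_trichotomy m n with hlt | heq | hgt
  · exact absurd h (key m n hlt)
  · exact heq
  · exact absurd h.symm (key n m hgt)

lemma bseq_ne_eV {k n : ℕ} (h : k ≤ n) : bseq H hext eV n ≠ eV k := by
  intro heq
  exact (bseq_spec H hext eV n).1 (heq ▸ mem_S1_right eV h)


lemma bseq_internal {i j k : ℕ} (hij : i < j) (hjk : j < k) :
    (({bseq H hext eV i, bseq H hext eV j, bseq H hext eV k} : Finset V) ∈ H
      ↔ (i = 0 ∧ k = j + 1)) := by
  set b := bseq H hext eV with hbdef
  have hbinj : Function.Injective b := bseq_inj H hext eV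
  have hmem_i : b i ∈ S1 eV b k := mem_S1_left eV (by omega)
  have hmem_j : b j ∈ S1 eV b k := mem_S1_left eV (by omega)
  have hne : b i ≠ b j := fun h => (by omega : ¬ (i = j)) (hbinj h)
  have hiff := (bseq_spec H hext eV k).2 (b i) hmem_i (b j) hmem_j hne
  have hperm : ({b i, b j, b k} : Finset V) = {b k, b i, b j} := by ext a; simp only [Finset.mem_insert, Finset.mem_singleton]; tauto
  rw [hperm, hiff]
  simp only [P1, Set.mem_setOf_eq]
  constructor
  · rintro (⟨hk2, hne0, hpair⟩ | ⟨hk1, hnot, hpair⟩)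
    · rcases pair_eq_cases hpair with ⟨h1, h2 | h2⟩ | ⟨h1, h2 | h2⟩
      · have hi0 : i = 0 := hbinj h1
        have hj1 : j = k - 1 := hbinj h2
        omega
      · have : j = 0 := hbinj h2
        omega
      · have hik : i = k - 1 := hbinj h1
        have hj0 : j = 0 := hbinj h2
        omega
      · have : i = k - 1 := hbinj h1
        have : j = k - 1 := hbinj h2
        omega
    · exfalso
      rcases pair_eq_cases hpair with ⟨h1, h2 | h2⟩ | ⟨h1, h2 | h2⟩
      · exact hnot (Finset.mem_image.2 ⟨j, Finset.mem_range.2 (by omega), h2⟩)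
      · have : j = 0 := hbinj h2
        omega
      · exact hnot (Finset.mem_image.2 ⟨i, Finset.mem_range.2 (by omega), h1⟩)
      · exact hnot (Finset.mem_image.2 ⟨i, Finset.mem_range.2 (by omega), h1⟩)
  · rintro ⟨hi0, hk1⟩
    left
    refine ⟨by omega, fun h => (by omega : ¬ ((0:ℕ) = k - 1)) (hbinj h), ?_⟩
    rw [hi0, show k - 1 = j from by omega]

lemma bseq_marker {k m : ℕ} (hw : eV k ∉ Set.range (bseq H hext eV)) (hk : k ≤ m)
    (hm : 1 ≤ m) :
    (({bseq H hext eV m, bseq H hext eV 0, eV k} : Finset V) ∈ H ↔ m = k) := by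
  set b := bseq H hext eV with hbdef
  have h0 : b 0 ∈ S1 eV b m := mem_S1_left eV (by omega)
  have hk' : eV k ∈ S1 eV b m := mem_S1_right eV hk
  have hne : b 0 ≠ eV k := fun h => hw ⟨0, h⟩
  have hiff := (bseq_spec H hext eV m).2 (b 0) h0 (eV k) hk' hne
  rw [hiff]
  simp only [P1, Set.mem_setOf_eq]
  constructor
  · rintro (⟨hm2, hne0, hpair⟩ | ⟨hm1, hnot, hpair⟩)
    · exfalso
      rcases pair_eq_cases hpair with ⟨h1, h2 | h2⟩ | ⟨h1, h2 | h2⟩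
      · exact hw ⟨m - 1, h2.symm⟩
      · exact hw ⟨0, h2.symm⟩
      · exact hw ⟨0, h2.symm⟩
      · exact hw ⟨m - 1, h2.symm⟩
    · rcases pair_eq_cases hpair with ⟨h1, h2 | h2⟩ | ⟨h1, h2 | h2⟩
      · exact (eV.injective h2).symm
      · exact absurd h2.symm hne
      · exfalso
        exact hnot (Finset.mem_image.2 ⟨0, Finset.mem_range.2 (by omega), h1⟩)
      · exfalso
        exact hnot (Finset.mem_image.2 ⟨0, Finset.mem_range.2 (by omega), h1⟩)
  · intro hmk
    right
    refine ⟨hm, ?_, ?_⟩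
    · intro hmem
      rcases Finset.mem_image.1 hmem with ⟨i, _, hi⟩
      rw [hmk] at hi
      exact hw ⟨i, hi⟩
    · rw [hmk]

lemma pair_card_le (x y : V) : ({x, y} : Finset V).card ≤ 2 := by
  apply le_trans (Finset.card_insert_le _ _)
  simp

lemma ne_of_triple_card {x y z : V} (h : ({x, y, z} : Finset V).card = 3) :
    x ≠ y ∧ x ≠ z ∧ y ≠ z := by
  refine ⟨fun e => ?_, fun e => ?_, fun e => ?_⟩
  · rw [show ({x, y, z} : Finset V) = {y, z} from by rw [← e]; ext a; simp only [Finset.mem_insert, Finset.mem_singleton]; tauto] at h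
    have := pair_card_le y z; omega
  · rw [show ({x, y, z} : Finset V) = {y, z} from by rw [e]; ext a; simp only [Finset.mem_insert, Finset.mem_singleton]; tauto] at h
    have := pair_card_le y z; omega
  · rw [show ({x, y, z} : Finset V) = {x, z} from by rw [e]; ext a; simp only [Finset.mem_insert, Finset.mem_singleton]; tauto] at h
    have := pair_card_le x z; omega

include h3 in
lemma edge_transport (g : V ≃ V)
    (hg : ∀ e : Finset V, e.card = 3 → (e ∈ H ↔ e.image g ∈ H)) (x y z : V) :
    (({x, y, z} : Finset V) ∈ H) ↔ (({g x, g y, g z} : Finset V) ∈ H) := by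
  have himg : ({x, y, z} : Finset V).image g = {g x, g y, g z} := by
    simp [Finset.image_insert]
  constructor
  · intro h
    have hc := h3 _ h
    have := (hg _ hc).1 h
    rwa [himg] at this
  · intro h
    have hc : ({g x, g y, g z} : Finset V).card = 3 := h3 _ h
    have hxyz : ({x, y, z} : Finset V).card = 3 := by
      rw [← Finset.card_image_of_injective _ g.injective, himg]
      exact hc
    exact (hg _ hxyz).2 (by rwa [himg])

include h3 in
lemma rigid (g : V ≃ V)
    (hg : ∀ e : Finset V, e.card = 3 → (e ∈ H ↔ e.image g ∈ H))
    (hB : ∀ n, ∃ m, g (bseq H hext eV n) = bseq H hext eV m)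
    (hB' : ∀ n, ∃ m, g (bseq H hext eV m) = bseq H hext eV n) :
    ∀ n, g (bseq H hext eV n) = bseq H hext eV n := by
  set b := bseq H hext eV with hbdef
  have hbinj : Function.Injective b := bseq_inj H hext eV
  have hT : ∀ x y z : V, (({x, y, z} : Finset V) ∈ H) ↔ (({g x, g y, g z} : Finset V) ∈ H) :=
    edge_transport H h3 g hg
  have hint : ∀ {i j k : ℕ}, i < j → j < k →
      (({b i, b j, b k} : Finset V) ∈ H ↔ (i = 0 ∧ k = j + 1)) :=
    fun hij hjk => bseq_internal H hext eV hij hjk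
  have hgap : ∀ j i : ℕ, 1 ≤ j → ({b j, b (j+2), b i} : Finset V) ∈ H → False := by
    intro j i hj hmem
    obtain ⟨hd1, hd2, hd3⟩ := ne_of_triple_card (h3 _ hmem)
    have hij : i ≠ j := fun e => hd2 (by rw [e])
    have hij2 : i ≠ j + 2 := fun e => hd3 (by rw [e])
    rcases lt_trichotomy i j with hlt | heq | hgt
    · rw [show ({b j, b (j+2), b i} : Finset V) = {b i, b j, b (j+2)} from by
        ext a; simp only [Finset.mem_insert, Finset.mem_singleton]; tauto] at hmem
      have := (hint hlt (by omega)).1 hmem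
      omega
    · exact hij heq
    · rcases (by omega : i = j + 1 ∨ j + 2 < i) with rfl | hgt2
      · rw [show ({b j, b (j+2), b (j+1)} : Finset V) = {b j, b (j+1), b (j+2)} from by
          ext a; simp only [Finset.mem_insert, Finset.mem_singleton]; tauto] at hmem
        have := (hint (by omega : j < j+1) (by omega)).1 hmem
        omega
      · have := (hint (by omega : j < j+2) hgt2).1 hmem
        omega
  have hchar01 : ∀ t : ℕ, ({b 0, b 1, b t} : Finset V) ∈ H → t = 2 := by
    intro t hmem
    obtain ⟨hd1, hd2, hd3⟩ := ne_of_triple_card (h3 _ hmem)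
    have ht0 : t ≠ 0 := fun e => hd2 (by rw [e])
    have ht1 : t ≠ 1 := fun e => hd3 (by rw [e])
    have := (hint (by omega : 0 < 1) (by omega : 1 < t)).1 hmem
    omega
  have hg0 : g (b 0) = b 0 := by
    obtain ⟨j, hj⟩ := hB 0
    rcases Nat.eq_zero_or_pos j with hj0 | hjpos
    · rw [hj, hj0]
    · exfalso
      obtain ⟨m, hm⟩ := hB' (j + 2)
      have hm0 : m ≠ 0 := by
        intro e
        rw [e, hj] at hm
        exact (by omega : ¬ (j = j + 2)) (hbinj hm)
      have hedge : ({b 0, b m, b (m+1)} : Finset V) ∈ H :=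
        (hint (by omega) (by omega)).2 ⟨rfl, rfl⟩
      have himg := (hT (b 0) (b m) (b (m+1))).1 hedge
      rw [hj, hm] at himg
      obtain ⟨i, hi⟩ := hB (m+1)
      rw [hi] at himg
      exact hgap j i hjpos himg
  have hg1 : g (b 1) = b 1 := by
    obtain ⟨m, hm⟩ := hB 1
    have hm0 : m ≠ 0 := by
      intro e
      rw [e, ← hg0] at hm
      exact (by omega : ¬ ((1:ℕ) = 0)) (hbinj (g.injective hm))
    rcases (by omega : m = 1 ∨ 2 ≤ m) with hm1 | hm2
    · rw [hm, hm1]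
    · exfalso
      obtain ⟨i, hi⟩ := hB' (m-1)
      have hedge : ({b 0, b (m-1), b m} : Finset V) ∈ H :=
        (hint (by omega) (by omega)).2 ⟨rfl, by omega⟩
      have himg : ({g (b 0), g (b 1), g (b i)} : Finset V) ∈ H := by
        rw [hg0, hm, hi]
        rw [show ({b 0, b m, b (m-1)} : Finset V) = {b 0, b (m-1), b m} from by
          ext a; simp only [Finset.mem_insert, Finset.mem_singleton]; tauto]
        exact hedge
      have hi2 : i = 2 := hchar01 i ((hT _ _ _).2 himg)
      obtain ⟨i', hi'⟩ := hB' (m+1)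
      have hedge' : ({b 0, b m, b (m+1)} : Finset V) ∈ H :=
        (hint (by omega) (by omega)).2 ⟨rfl, rfl⟩
      have himg' : ({g (b 0), g (b 1), g (b i')} : Finset V) ∈ H := by
        rw [hg0, hm, hi']
        exact hedge'
      have hi'2 : i' = 2 := hchar01 i' ((hT _ _ _).2 himg')
      rw [hi2] at hi
      rw [hi'2] at hi'
      have : b (m-1) = b (m+1) := hi.symm.trans hi'
      exact (by omega : ¬ (m - 1 = m + 1)) (hbinj this)
  have main : ∀ k, g (b k) = b k ∧ g (b (k+1)) = b (k+1) := by
    intro k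
    induction k with
    | zero => exact ⟨hg0, hg1⟩
    | succ k ih =>
      refine ⟨ih.2, ?_⟩
      obtain ⟨i, hi⟩ := hB (k+2)
      have hedge : ({b 0, b (k+1), b (k+2)} : Finset V) ∈ H :=
        (hint (by omega) (by omega)).2 ⟨rfl, rfl⟩
      have himg : ({b 0, b (k+1), b i} : Finset V) ∈ H := by
        have := (hT (b 0) (b (k+1)) (b (k+2))).1 hedge
        rwa [hg0, ih.2, hi] at this
      obtain ⟨hne1, hne2, hne3⟩ := ne_of_triple_card (h3 _ himg)
      have hi0 : i ≠ 0 := fun e => hne2 (by rw [e])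
      have hik1 : i ≠ k + 1 := fun e => hne3 (by rw [e])
      have hik : i ≠ k := by
        intro e
        rw [e] at hi
        have : b (k+2) = b k := g.injective (hi.trans ih.1.symm)
        exact (by omega : ¬ (k + 2 = k)) (hbinj this)
      rcases lt_trichotomy i (k+1) with hlt | heq | hgt
      · have hip : 0 < i := by omega
        rw [show ({b 0, b (k+1), b i} : Finset V) = {b 0, b i, b (k+1)} from by
          ext a; simp only [Finset.mem_insert, Finset.mem_singleton]; tauto] at himg
        have := (hint hip hlt).1 himg
        omega
      · exact absurd heq hik1
      · have := (hint (by omega : 0 < k+1) hgt).1 himg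
        rw [show i = k + 2 from by omega] at hi
        exact hi
  exact fun n => (main n).1

include h3 hext eV in
lemma part1 : ∃ c : V → Bool, ∀ g : V ≃ V,
    (∀ e : Finset V, e.card = 3 → (e ∈ H ↔ e.image g ∈ H)) →
    (∀ v, c (g v) = c v) → ∀ v, g v = v := by
  classical
  set b := bseq H hext eV with hbdef
  refine ⟨fun v => decide (v ∈ Set.range b), ?_⟩
  intro g hg hc
  have hcol : ∀ v, g v ∈ Set.range b ↔ v ∈ Set.range b :=
    fun v => decide_eq_decide.mp (hc v)
  have hB : ∀ n, ∃ m, g (b n) = b m := by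
    intro n
    obtain ⟨m, hm⟩ := (hcol (b n)).2 ⟨n, rfl⟩
    exact ⟨m, hm.symm⟩
  have hB' : ∀ n, ∃ m, g (b m) = b n := by
    intro n
    have h1 : g (g.symm (b n)) ∈ Set.range b := by
      rw [Equiv.apply_symm_apply]; exact ⟨n, rfl⟩
    obtain ⟨m, hm⟩ := (hcol _).1 h1
    exact ⟨m, by rw [hm, Equiv.apply_symm_apply]⟩
  have hfix := rigid H h3 hext eV g hg hB hB'
  intro v
  by_cases hv : v ∈ Set.range b
  · obtain ⟨n, rfl⟩ := hv
    exact hfix n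
  · obtain ⟨k, rfl⟩ := eV.surjective v
    have hw : g (eV k) ∉ Set.range b := fun h => hv ((hcol _).1 h)
    obtain ⟨l, hl⟩ := eV.surjective (g (eV k))
    by_contra hne
    have hkl : k ≠ l := by
      intro e
      apply hne
      rw [← hl, e]
    have hm1 : 1 ≤ max k l := by omega
    have e1 : (({b (max k l), b 0, eV k} : Finset V) ∈ H ↔ max k l = k) :=
      bseq_marker H hext eV hv (le_max_left _ _) hm1
    have e2 : (({b (max k l), b 0, eV l} : Finset V) ∈ H ↔ max k l = l) :=
      bseq_marker H hext eV (hl ▸ hw) (le_max_right _ _) hm1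
    have etrans : (({b (max k l), b 0, eV k} : Finset V) ∈ H ↔
        ({b (max k l), b 0, eV l} : Finset V) ∈ H) := by
      have h := edge_transport H h3 g hg (b (max k l)) (b 0) (eV k)
      rwa [hfix (max k l), hfix 0, ← hl] at h
    have hiff : (max k l = k) ↔ (max k l = l) := by
      rw [← e1, ← e2]; exact etrans
    rcases (by omega : max k l = k ∨ max k l = l) with h | h
    · have := hiff.1 h; omega
    · have := hiff.2 h; omega

/-! ### Part 2: a nontrivial automorphism via back-and-forth -/

def SA (f : ℕ → V × V) (n : ℕ) : Finset V := (Finset.range n).image (fun i => (f i).1)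

def SB (f : ℕ → V × V) (n : ℕ) : Finset V := (Finset.range n).image (fun i => (f i).2)

def PB (f : ℕ → V × V) (n : ℕ) (a : V) : Set (Finset V) :=
  {q | ∃ i j, i < n ∧ j < n ∧ (f i).2 ≠ (f j).2 ∧ q = {(f i).2, (f j).2} ∧
        ({a, (f i).1, (f j).1} : Finset V) ∈ H}

def PA (f : ℕ → V × V) (n : ℕ) (bb : V) : Set (Finset V) :=
  {q | ∃ i j, i < n ∧ j < n ∧ (f i).1 ≠ (f j).1 ∧ q = {(f i).1, (f j).1} ∧
        ({bb, (f i).2, (f j).2} : Finset V) ∈ H}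

lemma PB_good (f : ℕ → V × V) (n : ℕ) (a : V) :
    ∀ q ∈ PB H f n a, q ⊆ SB f n ∧ q.card = 2 := by
  rintro q ⟨i, j, hi, hj, hne, rfl, _⟩
  refine ⟨?_, Finset.card_pair hne⟩
  intro x hx
  simp only [Finset.mem_insert, Finset.mem_singleton] at hx
  rcases hx with rfl | rfl
  · exact Finset.mem_image.2 ⟨i, Finset.mem_range.2 hi, rfl⟩
  · exact Finset.mem_image.2 ⟨j, Finset.mem_range.2 hj, rfl⟩

lemma PA_good (f : ℕ → V × V) (n : ℕ) (bb : V) :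
    ∀ q ∈ PA H f n bb, q ⊆ SA f n ∧ q.card = 2 := by
  rintro q ⟨i, j, hi, hj, hne, rfl, _⟩
  refine ⟨?_, Finset.card_pair hne⟩
  intro x hx
  simp only [Finset.mem_insert, Finset.mem_singleton] at hx
  rcases hx with rfl | rfl
  · exact Finset.mem_image.2 ⟨i, Finset.mem_range.2 hi, rfl⟩
  · exact Finset.mem_image.2 ⟨j, Finset.mem_range.2 hj, rfl⟩

noncomputable def evenA (f : ℕ → V × V) (n : ℕ) : V :=
  if eV (n/2) ∈ SA f n then choosePt H hext (SA f n) ∅ else eV (n/2)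

noncomputable def oddB (f : ℕ → V × V) (n : ℕ) : V :=
  if eV (n/2) ∈ SB f n then choosePt H hext (SB f n) ∅ else eV (n/2)

noncomputable def step2 (n : ℕ) (f : ℕ → V × V) : V × V :=
  if n = 0 then (eV 0, choosePt H hext {eV 0} ∅)
  else if n % 2 = 0 then
    (evenA H hext eV f n, choosePt H hext (SB f n) (PB H f n (evenA H hext eV f n)))
  else
    (choosePt H hext (SA f n) (PA H f n (oddB H hext eV f n)), oddB H hext eV f n)

lemma SA_congr {f g : ℕ → V × V} {n : ℕ} (h : ∀ m < n, f m = g m) : SA f n = SA g n :=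
  Finset.image_congr (fun x hx => by rw [h x (by simpa using hx)])

lemma SB_congr {f g : ℕ → V × V} {n : ℕ} (h : ∀ m < n, f m = g m) : SB f n = SB g n :=
  Finset.image_congr (fun x hx => by rw [h x (by simpa using hx)])

lemma PB_congr {f g : ℕ → V × V} {n : ℕ} (h : ∀ m < n, f m = g m) (a : V) :
    PB H f n a = PB H g n a := by
  ext q
  constructor
  · rintro ⟨i, j, hi, hj, hne, rfl, hH⟩
    exact ⟨i, j, hi, hj, by rw [← h i hi, ← h j hj]; exact hne,
      by rw [h i hi, h j hj], by rw [← h i hi, ← h j hj]; exact hH⟩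
  · rintro ⟨i, j, hi, hj, hne, rfl, hH⟩
    exact ⟨i, j, hi, hj, by rw [h i hi, h j hj]; exact hne,
      by rw [h i hi, h j hj], by rw [h i hi, h j hj]; exact hH⟩

lemma PA_congr {f g : ℕ → V × V} {n : ℕ} (h : ∀ m < n, f m = g m) (bb : V) :
    PA H f n bb = PA H g n bb := by
  ext q
  constructor
  · rintro ⟨i, j, hi, hj, hne, rfl, hH⟩
    exact ⟨i, j, hi, hj, by rw [← h i hi, ← h j hj]; exact hne,
      by rw [h i hi, h j hj], by rw [← h i hi, ← h j hj]; exact hH⟩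
  · rintro ⟨i, j, hi, hj, hne, rfl, hH⟩
    exact ⟨i, j, hi, hj, by rw [h i hi, h j hj]; exact hne,
      by rw [h i hi, h j hj], by rw [h i hi, h j hj]; exact hH⟩

lemma step2_congr {f g : ℕ → V × V} {n : ℕ} (h : ∀ m < n, f m = g m) :
    step2 H hext eV n f = step2 H hext eV n g := by
  unfold step2 evenA oddB
  rw [SA_congr h, SB_congr h, PB_congr H h, PA_congr H h]

noncomputable def pseq : ℕ → V × V := build (step2 H hext eV)

lemma pseq_eq (n : ℕ) :
    pseq H hext eV n = step2 H hext eV n (pseq H hext eV) :=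
  step2_congr H hext eV (approx_eq_build _ n)

lemma pseq_zero : pseq H hext eV 0 = (eV 0, choosePt H hext {eV 0} ∅) := by
  rw [pseq_eq]
  simp [step2]

lemma pseq_even {n : ℕ} (h0 : n ≠ 0) (he : n % 2 = 0) :
    pseq H hext eV n =
      (evenA H hext eV (pseq H hext eV) n,
       choosePt H hext (SB (pseq H hext eV) n)
         (PB H (pseq H hext eV) n (evenA H hext eV (pseq H hext eV) n))) := by
  rw [pseq_eq]
  simp only [step2, if_neg h0, if_pos he]

lemma pseq_odd {n : ℕ} (ho : n % 2 = 1) :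
    pseq H hext eV n =
      (choosePt H hext (SA (pseq H hext eV) n)
         (PA H (pseq H hext eV) n (oddB H hext eV (pseq H hext eV) n)),
       oddB H hext eV (pseq H hext eV) n) := by
  have h0 : n ≠ 0 := by omega
  have he : ¬ (n % 2 = 0) := by omega
  rw [pseq_eq]
  simp only [step2, if_neg h0, if_neg he]

lemma empty_good (S : Finset V) : ∀ q ∈ (∅ : Set (Finset V)), q ⊆ S ∧ q.card = 2 := by
  simp

lemma aseq_not_mem (n : ℕ) : (pseq H hext eV n).1 ∉ SA (pseq H hext eV) n := by
  rcases Nat.eq_zero_or_pos n with rfl | hn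
  · simp [SA]
  rcases Nat.even_or_odd n with he | ho
  · have he' : n % 2 = 0 := Nat.even_iff.1 he
    rw [pseq_even H hext eV (by omega) he']
    simp only
    unfold evenA
    split
    · exact (choosePt_spec H hext (empty_good _)).1
    · assumption
  · have ho' : n % 2 = 1 := Nat.odd_iff.1 ho
    rw [pseq_odd H hext eV ho']
    simp only
    exact (choosePt_spec H hext (PA_good H _ n _)).1

lemma bseq2_not_mem (n : ℕ) : (pseq H hext eV n).2 ∉ SB (pseq H hext eV) n := by
  rcases Nat.eq_zero_or_pos n with rfl | hn
  · simp [SB]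
  rcases Nat.even_or_odd n with he | ho
  · have he' : n % 2 = 0 := Nat.even_iff.1 he
    rw [pseq_even H hext eV (by omega) he']
    simp only
    exact (choosePt_spec H hext (PB_good H _ n _)).1
  · have ho' : n % 2 = 1 := Nat.odd_iff.1 ho
    rw [pseq_odd H hext eV ho']
    simp only
    unfold oddB
    split
    · exact (choosePt_spec H hext (empty_good _)).1
    · assumption

lemma aseq_inj : Function.Injective (fun n => (pseq H hext eV n).1) := by
  have key : ∀ m n : ℕ, m < n → (pseq H hext eV m).1 ≠ (pseq H hext eV n).1 := by
    intro m n hmn heq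
    exact aseq_not_mem H hext eV n
      (heq ▸ Finset.mem_image.2 ⟨m, Finset.mem_range.2 hmn, rfl⟩)
  intro m n h
  rcases lt_trichotomy m n with hlt | heq | hgt
  · exact absurd h (key m n hlt)
  · exact heq
  · exact absurd h.symm (key n m hgt)

lemma bseq2_inj : Function.Injective (fun n => (pseq H hext eV n).2) := by
  have key : ∀ m n : ℕ, m < n → (pseq H hext eV m).2 ≠ (pseq H hext eV n).2 := by
    intro m n hmn heq
    exact bseq2_not_mem H hext eV n
      (heq ▸ Finset.mem_image.2 ⟨m, Finset.mem_range.2 hmn, rfl⟩)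
  intro m n h
  rcases lt_trichotomy m n with hlt | heq | hgt
  · exact absurd h (key m n hlt)
  · exact heq
  · exact absurd h.symm (key n m hgt)

lemma pair_in_PB {i j n : ℕ} (hi : i < n) (hj : j < n) (hij : i ≠ j) (a : V) :
    (({(pseq H hext eV i).2, (pseq H hext eV j).2} : Finset V)
        ∈ PB H (pseq H hext eV) n a) ↔
      (({a, (pseq H hext eV i).1, (pseq H hext eV j).1} : Finset V) ∈ H) := by
  constructor
  · rintro ⟨i', j', hi', hj', hne', hq, hH⟩
    rcases pair_eq_cases hq with ⟨h1, h2 | h2⟩ | ⟨h1, h2 | h2⟩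
    · have e1 : i = i' := bseq2_inj H hext eV h1
      have e2 : j = j' := bseq2_inj H hext eV h2
      rw [e1, e2]
      exact hH
    · have e1 : i = i' := bseq2_inj H hext eV h1
      have e2 : j = i' := bseq2_inj H hext eV h2
      exact absurd (e1.trans e2.symm) hij
    · have e1 : i = j' := bseq2_inj H hext eV h1
      have e2 : j = i' := bseq2_inj H hext eV h2
      rw [e1, e2]
      rw [show ({a, (pseq H hext eV j').1, (pseq H hext eV i').1} : Finset V)
        = {a, (pseq H hext eV i').1, (pseq H hext eV j').1} from by
          ext x; simp only [Finset.mem_insert, Finset.mem_singleton]; tauto]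
      exact hH
    · have e1 : i = j' := bseq2_inj H hext eV h1
      have e2 : j = j' := bseq2_inj H hext eV h2
      exact absurd (e1.trans e2.symm) hij
  · intro hH
    exact ⟨i, j, hi, hj, fun h => hij (bseq2_inj H hext eV h), rfl, hH⟩

lemma pair_in_PA {i j n : ℕ} (hi : i < n) (hj : j < n) (hij : i ≠ j) (bb : V) :
    (({(pseq H hext eV i).1, (pseq H hext eV j).1} : Finset V)
        ∈ PA H (pseq H hext eV) n bb) ↔
      (({bb, (pseq H hext eV i).2, (pseq H hext eV j).2} : Finset V) ∈ H) := by
  constructor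
  · rintro ⟨i', j', hi', hj', hne', hq, hH⟩
    rcases pair_eq_cases hq with ⟨h1, h2 | h2⟩ | ⟨h1, h2 | h2⟩
    · have e1 : i = i' := aseq_inj H hext eV h1
      have e2 : j = j' := aseq_inj H hext eV h2
      rw [e1, e2]
      exact hH
    · have e1 : i = i' := aseq_inj H hext eV h1
      have e2 : j = i' := aseq_inj H hext eV h2
      exact absurd (e1.trans e2.symm) hij
    · have e1 : i = j' := aseq_inj H hext eV h1
      have e2 : j = i' := aseq_inj H hext eV h2
      rw [e1, e2]
      rw [show ({bb, (pseq H hext eV j').2, (pseq H hext eV i').2} : Finset V)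
        = {bb, (pseq H hext eV i').2, (pseq H hext eV j').2} from by
          ext x; simp only [Finset.mem_insert, Finset.mem_singleton]; tauto]
      exact hH
    · have e1 : i = j' := aseq_inj H hext eV h1
      have e2 : j = j' := aseq_inj H hext eV h2
      exact absurd (e1.trans e2.symm) hij
  · intro hH
    exact ⟨i, j, hi, hj, fun h => hij (aseq_inj H hext eV h), rfl, hH⟩

lemma pseq_edge_new {k i j : ℕ} (hi : i < k) (hj : j < k) (hij : i ≠ j) :
    (({(pseq H hext eV k).1, (pseq H hext eV i).1, (pseq H hext eV j).1} : Finset V) ∈ H ↔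
     ({(pseq H hext eV k).2, (pseq H hext eV i).2, (pseq H hext eV j).2} : Finset V) ∈ H) := by
  have hk0 : k ≠ 0 := by omega
  have hiA : (pseq H hext eV i).1 ∈ SA (pseq H hext eV) k :=
    Finset.mem_image.2 ⟨i, Finset.mem_range.2 hi, rfl⟩
  have hjA : (pseq H hext eV j).1 ∈ SA (pseq H hext eV) k :=
    Finset.mem_image.2 ⟨j, Finset.mem_range.2 hj, rfl⟩
  have hiB : (pseq H hext eV i).2 ∈ SB (pseq H hext eV) k :=
    Finset.mem_image.2 ⟨i, Finset.mem_range.2 hi, rfl⟩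
  have hjB : (pseq H hext eV j).2 ∈ SB (pseq H hext eV) k :=
    Finset.mem_image.2 ⟨j, Finset.mem_range.2 hj, rfl⟩
  have hneA : (pseq H hext eV i).1 ≠ (pseq H hext eV j).1 :=
    fun h => hij (aseq_inj H hext eV h)
  have hneB : (pseq H hext eV i).2 ≠ (pseq H hext eV j).2 :=
    fun h => hij (bseq2_inj H hext eV h)
  rcases Nat.even_or_odd k with he | ho
  · have he' : k % 2 = 0 := Nat.even_iff.1 he
    have hb : (pseq H hext eV k).2 = choosePt H hext (SB (pseq H hext eV) k)
        (PB H (pseq H hext eV) k (evenA H hext eV (pseq H hext eV) k)) := by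
      rw [pseq_even H hext eV hk0 he']
    have ha : (pseq H hext eV k).1 = evenA H hext eV (pseq H hext eV) k := by
      rw [pseq_even H hext eV hk0 he']
    have hspec := (choosePt_spec H hext
      (PB_good H (pseq H hext eV) k (evenA H hext eV (pseq H hext eV) k))).2
      _ hiB _ hjB hneB
    rw [← hb] at hspec
    rw [hspec, pair_in_PB H hext eV hi hj hij, ← ha]
  · have ho' : k % 2 = 1 := Nat.odd_iff.1 ho
    have ha : (pseq H hext eV k).1 = choosePt H hext (SA (pseq H hext eV) k)
        (PA H (pseq H hext eV) k (oddB H hext eV (pseq H hext eV) k)) := by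
      rw [pseq_odd H hext eV ho']
    have hb : (pseq H hext eV k).2 = oddB H hext eV (pseq H hext eV) k := by
      rw [pseq_odd H hext eV ho']
    have hspec := (choosePt_spec H hext
      (PA_good H (pseq H hext eV) k (oddB H hext eV (pseq H hext eV) k))).2
      _ hiA _ hjA hneA
    rw [← ha] at hspec
    rw [hspec, pair_in_PA H hext eV hi hj hij, ← hb]

lemma pseq_edge_any {n1 n2 n3 : ℕ} (h12 : n1 ≠ n2) (h13 : n1 ≠ n3) (h23 : n2 ≠ n3) :
    (({(pseq H hext eV n1).1, (pseq H hext eV n2).1, (pseq H hext eV n3).1} : Finset V) ∈ H ↔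
     ({(pseq H hext eV n1).2, (pseq H hext eV n2).2, (pseq H hext eV n3).2} : Finset V) ∈ H) := by
  rcases (by omega : (n2 < n1 ∧ n3 < n1) ∨ (n1 < n2 ∧ n3 < n2) ∨ (n1 < n3 ∧ n2 < n3)) with
    ⟨h, h'⟩ | ⟨h, h'⟩ | ⟨h, h'⟩
  · exact pseq_edge_new H hext eV h h' h23
  · rw [show ({(pseq H hext eV n1).1, (pseq H hext eV n2).1, (pseq H hext eV n3).1} : Finset V)
        = {(pseq H hext eV n2).1, (pseq H hext eV n1).1, (pseq H hext eV n3).1} from by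
        ext x; simp only [Finset.mem_insert, Finset.mem_singleton]; tauto,
      show ({(pseq H hext eV n1).2, (pseq H hext eV n2).2, (pseq H hext eV n3).2} : Finset V)
        = {(pseq H hext eV n2).2, (pseq H hext eV n1).2, (pseq H hext eV n3).2} from by
        ext x; simp only [Finset.mem_insert, Finset.mem_singleton]; tauto]
    exact pseq_edge_new H hext eV h h' h13
  · rw [show ({(pseq H hext eV n1).1, (pseq H hext eV n2).1, (pseq H hext eV n3).1} : Finset V)
        = {(pseq H hext eV n3).1, (pseq H hext eV n1).1, (pseq H hext eV n2).1} from by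
        ext x; simp only [Finset.mem_insert, Finset.mem_singleton]; tauto,
      show ({(pseq H hext eV n1).2, (pseq H hext eV n2).2, (pseq H hext eV n3).2} : Finset V)
        = {(pseq H hext eV n3).2, (pseq H hext eV n1).2, (pseq H hext eV n2).2} from by
        ext x; simp only [Finset.mem_insert, Finset.mem_singleton]; tauto]
    exact pseq_edge_new H hext eV h h' h12

lemma aseq_surj : Function.Surjective (fun n => (pseq H hext eV n).1) := by
  intro v
  obtain ⟨m, rfl⟩ := eV.surjective v
  rcases Nat.eq_zero_or_pos m with rfl | hm
  · exact ⟨0, by show (pseq H hext eV 0).1 = eV 0; rw [pseq_zero]⟩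
  by_cases hmem : eV m ∈ SA (pseq H hext eV) (2*m)
  · obtain ⟨i, _, hi⟩ := Finset.mem_image.1 hmem
    exact ⟨i, hi⟩
  · refine ⟨2*m, ?_⟩
    have h0 : (2*m : ℕ) ≠ 0 := by omega
    have he : (2*m) % 2 = 0 := by omega
    have ha : (pseq H hext eV (2*m)).1 = evenA H hext eV (pseq H hext eV) (2*m) := by
      rw [pseq_even H hext eV h0 he]
    show (pseq H hext eV (2*m)).1 = eV m
    rw [ha]
    unfold evenA
    rw [show (2*m)/2 = m from by omega, if_neg hmem]

lemma bseq2_surj : Function.Surjective (fun n => (pseq H hext eV n).2) := by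
  intro v
  obtain ⟨m, rfl⟩ := eV.surjective v
  by_cases hmem : eV m ∈ SB (pseq H hext eV) (2*m+1)
  · obtain ⟨i, _, hi⟩ := Finset.mem_image.1 hmem
    exact ⟨i, hi⟩
  · refine ⟨2*m+1, ?_⟩
    have ho : (2*m+1) % 2 = 1 := by omega
    have hb : (pseq H hext eV (2*m+1)).2 = oddB H hext eV (pseq H hext eV) (2*m+1) := by
      rw [pseq_odd H hext eV ho]
    show (pseq H hext eV (2*m+1)).2 = eV m
    rw [hb]
    unfold oddB
    rw [show (2*m+1)/2 = m from by omega, if_neg hmem]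

include h3 hext eV in
lemma part2 : ∃ g : V ≃ V, (∀ e : Finset V, e.card = 3 → (e ∈ H ↔ e.image g ∈ H)) ∧
    ∃ v, g v ≠ v := by
  classical
  have hA : Function.Bijective (fun n => (pseq H hext eV n).1) :=
    ⟨aseq_inj H hext eV, aseq_surj H hext eV⟩
  have hB : Function.Bijective (fun n => (pseq H hext eV n).2) :=
    ⟨bseq2_inj H hext eV, bseq2_surj H hext eV⟩
  set eqA := Equiv.ofBijective _ hA with heqA
  set eqB := Equiv.ofBijective _ hB with heqB
  refine ⟨eqA.symm.trans eqB, ?_, ?_⟩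
  · have hgn : ∀ n, (eqA.symm.trans eqB) ((pseq H hext eV n).1) = (pseq H hext eV n).2 := by
      intro n
      simp only [Equiv.trans_apply, heqA, heqB]
      rw [Equiv.ofBijective_symm_apply_apply]
      rfl
    intro e hcard
    obtain ⟨x, y, z, hxy, hxz, hyz, rfl⟩ := Finset.card_eq_three.1 hcard
    obtain ⟨n1, rfl⟩ := aseq_surj H hext eV x
    obtain ⟨n2, rfl⟩ := aseq_surj H hext eV y
    obtain ⟨n3, rfl⟩ := aseq_surj H hext eV z
    have h12 : n1 ≠ n2 := fun h => hxy (by rw [h])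
    have h13 : n1 ≠ n3 := fun h => hxz (by rw [h])
    have h23 : n2 ≠ n3 := fun h => hyz (by rw [h])
    have himg : ({(pseq H hext eV n1).1, (pseq H hext eV n2).1, (pseq H hext eV n3).1} :
        Finset V).image (eqA.symm.trans eqB) =
        {(pseq H hext eV n1).2, (pseq H hext eV n2).2, (pseq H hext eV n3).2} := by
      rw [Finset.image_insert, Finset.image_insert, Finset.image_singleton,
        hgn n1, hgn n2, hgn n3]
    rw [himg]
    exact pseq_edge_any H hext eV h12 h13 h23
  · refine ⟨(pseq H hext eV 0).1, ?_⟩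
    have hgn : (eqA.symm.trans eqB) ((pseq H hext eV 0).1) = (pseq H hext eV 0).2 := by
      simp only [Equiv.trans_apply, heqA, heqB]
      rw [Equiv.ofBijective_symm_apply_apply]
      rfl
    rw [hgn, pseq_zero]
    intro h
    have := (choosePt_spec H hext (empty_good ({eV 0} : Finset V))).1
    simp only at h
    apply this
    rw [h]
    simp

end Hyp
end UnivHyp

theorem universal_three_uniform_hypergraph_distinguishing_number_two
    (V : Type*) [Countable V] [Infinite V] [DecidableEq V] (H : Set (Finset V))
    (h3 : ∀ e ∈ H, e.card = 3)
    (hext : ∀ S : Finset V, ∀ P : Set (Finset V), (∀ p ∈ P, p ⊆ S ∧ p.card = 2) →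
      ∃ x, x ∉ S ∧ ∀ a ∈ S, ∀ b ∈ S, a ≠ b →
        (({x, a, b} : Finset V) ∈ H ↔ ({a, b} : Finset V) ∈ P)) :
    (∃ c : V → Bool, ∀ g : V ≃ V,
        (∀ e : Finset V, e.card = 3 → (e ∈ H ↔ e.image g ∈ H)) →
        (∀ v, c (g v) = c v) → ∀ v, g v = v) ∧
    (∃ g : V ≃ V, (∀ e : Finset V, e.card = 3 → (e ∈ H ↔ e.image g ∈ H)) ∧
      ∃ v, g v ≠ v) := by
  letI : Encodable V := Encodable.ofCountable V
  letI : Denumerable V := Denumerable.ofEncodableOfInfinite V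
  let eV : ℕ ≃ V := (Denumerable.eqv V).symm
  exact ⟨UnivHyp.part1 H h3 hext eV, UnivHyp.part2 H h3 hext eV⟩
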